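/- Let p ≥ 1, let f : ℝ^p → ℝ be differentiable, let μ ∈ ℝ^p, let Σ be a symmetric positive definite p × p real matrix, and let A be a symmetric positive definite p × p real matrix with A² = Σ⁻¹ (so A = Σ^{−1/2}). Let ρ_x(x) = (2π)^{−p/2} (det Σ)^{−1/2} exp(−(x−μ)ᵀ Σ⁻¹ (x−μ)/2) be the N(μ, Σ) density and ρ_z(z) = (2π)^{−p/2} exp(−‖z‖²/2) the standard normal density on ℝ^p. Define f̃(z) = f(A⁻¹ z + μ), and assume that for all i, j the functions x ↦ (∂f/∂x_i)(x)(∂f/∂x_j)(x)ρ_x(x) are integrable. Then the C matrix of (f, ρ_x) satisfies C = Aᵀ C_z A, where C_z is the C matrix of (f̃, ρ_z). -/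

import Mathlib

open MeasureTheory Matrix

/-- The `i`-th partial derivative of `f` at `x`. -/
noncomputable def partialDeriv' {p : ℕ} (f : (Fin p → ℝ) → ℝ) (i : Fin p)
    (x : Fin p → ℝ) : ℝ :=
  fderiv ℝ f x (Pi.single i 1)

/-- The `C` matrix of `(f, ρ)`: `C i j = ∫ ∂f/∂xᵢ ∂f/∂xⱼ ρ`. -/
noncomputable def Cmat {p : ℕ} (f : (Fin p → ℝ) → ℝ) (ρ : (Fin p → ℝ) → ℝ) :
    Matrix (Fin p) (Fin p) ℝ :=
  Matrix.of fun i j => ∫ x, partialDeriv' f i x * partialDeriv' f j x * ρ x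

lemma aux_fderiv_sum {p : ℕ} (f : (Fin p → ℝ) → ℝ) (x v : Fin p → ℝ) :
    fderiv ℝ f x v = ∑ m, v m * partialDeriv' f m x := by
  conv_lhs => rw [← Finset.univ_sum_single v]
  rw [map_sum]
  refine Finset.sum_congr rfl fun m _ => ?_
  have : Pi.single m (v m) = v m • (Pi.single m 1 : Fin p → ℝ) := by
    ext j
    by_cases h : j = m <;> simp [h, Pi.single_apply]
  rw [this, (fderiv ℝ f x).map_smul, smul_eq_mul, partialDeriv']

lemma aux_map_affine {p : ℕ} (B : Matrix (Fin p) (Fin p) ℝ) (hB : B.det ≠ 0) (μ : Fin p → ℝ) :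
    Measure.map (fun z => B *ᵥ z + μ) volume
      = ENNReal.ofReal |B.det⁻¹| • volume := by
  have hL : LinearMap.det (Matrix.toLin' B) = B.det := LinearMap.det_toLin' B
  have h1 : Measure.map (fun z : Fin p → ℝ => B *ᵥ z) volume
      = ENNReal.ofReal |B.det⁻¹| • volume := by
    have := Measure.map_linearMap_addHaar_eq_smul_addHaar (volume : Measure (Fin p → ℝ))
      (f := Matrix.toLin' B) (by rw [hL]; exact hB)
    rw [hL] at this
    rw [show (fun z : Fin p → ℝ => B *ᵥ z) = ⇑(Matrix.toLin' B) from
      funext fun z => (Matrix.toLin'_apply B z).symm]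
    exact this
  have hc : Continuous (fun z : Fin p → ℝ => B *ᵥ z) :=
    LinearMap.continuous_of_finiteDimensional (Matrix.mulVecLin B)
  calc Measure.map (fun z => B *ᵥ z + μ) volume
      = Measure.map ((· + μ) ∘ fun z => B *ᵥ z) volume := rfl
    _ = Measure.map (· + μ) (Measure.map (fun z => B *ᵥ z) volume) :=
        (Measure.map_map (measurable_add_const μ) hc.measurable).symm
    _ = ENNReal.ofReal |B.det⁻¹| • volume := by
        rw [h1, Measure.map_smul, map_add_right_eq_self]


lemma aux_cov_integrable {p : ℕ} (B : Matrix (Fin p) (Fin p) ℝ) (hB : B.det ≠ 0)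
    (μ : Fin p → ℝ) (h : (Fin p → ℝ) → ℝ) (hInt : Integrable h) :
    Integrable (fun z => h (B *ᵥ z + μ)) := by
  have hg : Measurable (fun z : Fin p → ℝ => B *ᵥ z + μ) :=
    ((LinearMap.continuous_of_finiteDimensional (Matrix.mulVecLin B)).add
      continuous_const).measurable
  have hmap := aux_map_affine B hB μ
  have hms : AEStronglyMeasurable h
      (Measure.map (fun z : Fin p → ℝ => B *ᵥ z + μ) volume) := by
    rw [hmap]
    exact hInt.aestronglyMeasurable.mono_ac Measure.smul_absolutelyContinuous
  have : Integrable h (Measure.map (fun z : Fin p → ℝ => B *ᵥ z + μ) volume) := by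
    rw [hmap]
    exact hInt.smul_measure ENNReal.ofReal_ne_top
  exact (integrable_map_measure hms hg.aemeasurable).mp this

lemma aux_cov_integral {p : ℕ} (B : Matrix (Fin p) (Fin p) ℝ) (hB : B.det ≠ 0)
    (μ : Fin p → ℝ) (h : (Fin p → ℝ) → ℝ) (hInt : Integrable h) :
    ∫ z, h (B *ᵥ z + μ) = |B.det⁻¹| * ∫ x, h x := by
  have hg : Measurable (fun z : Fin p → ℝ => B *ᵥ z + μ) :=
    ((LinearMap.continuous_of_finiteDimensional (Matrix.mulVecLin B)).add
      continuous_const).measurable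
  have hmap := aux_map_affine B hB μ
  have hms : AEStronglyMeasurable h
      (Measure.map (fun z : Fin p → ℝ => B *ᵥ z + μ) volume) := by
    rw [hmap]
    exact hInt.aestronglyMeasurable.mono_ac Measure.smul_absolutelyContinuous
  rw [← integral_map hg.aemeasurable hms, hmap, integral_smul_measure,
    ENNReal.toReal_ofReal (abs_nonneg _), smul_eq_mul]

theorem Cmat_multivariate_gaussian {p : ℕ} (hp : 1 ≤ p)
    (f : (Fin p → ℝ) → ℝ) (hf : Differentiable ℝ f)
    (μ : Fin p → ℝ) (Sig A : Matrix (Fin p) (Fin p) ℝ)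
    (hSig : Sig.PosDef) (hA : A.PosDef) (hA2 : A * A = Sig⁻¹)
    (ρx : (Fin p → ℝ) → ℝ)
    (hρx : ∀ x, ρx x = (2 * Real.pi) ^ (-(p : ℝ) / 2) * Sig.det ^ (-(1 : ℝ) / 2) *
        Real.exp (-((x - μ) ⬝ᵥ Sig⁻¹.mulVec (x - μ)) / 2))
    (ρz : (Fin p → ℝ) → ℝ)
    (hρz : ∀ z, ρz z = (2 * Real.pi) ^ (-(p : ℝ) / 2) * Real.exp (-(∑ i, z i ^ 2) / 2))
    (ftil : (Fin p → ℝ) → ℝ) (hftil : ∀ z, ftil z = f (A⁻¹.mulVec z + μ))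
    (hint : ∀ i j,
      Integrable (fun x => partialDeriv' f i x * partialDeriv' f j x * ρx x)) :
    Cmat f ρx = Aᵀ * Cmat ftil ρz * A := by
  have hdetA : 0 < A.det := hA.det_pos
  have hdetS : 0 < Sig.det := hSig.det_pos
  have hAu : IsUnit A.det := isUnit_iff_ne_zero.mpr hdetA.ne'
  have hinv : A⁻¹ * A = 1 := Matrix.nonsing_inv_mul A hAu
  have hinv' : A * A⁻¹ = 1 := Matrix.mul_nonsing_inv A hAu
  have hdetAi : (A⁻¹).det = A.det⁻¹ := by
    rw [Matrix.det_nonsing_inv, Ring.inverse_eq_inv]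
  have hBne : (A⁻¹).det ≠ 0 := by
    rw [hdetAi]; exact inv_ne_zero hdetA.ne'
  have hAs : Aᵀ = A := by
    rw [← Matrix.conjTranspose_eq_transpose_of_trivial]; exact hA.1
  have hAis : (A⁻¹)ᵀ = A⁻¹ := by rw [Matrix.transpose_nonsing_inv, hAs]
  -- determinant identity
  have hdetAS : A.det = Sig.det ^ (-(1 : ℝ) / 2) := by
    have hsq : A.det * A.det = Sig.det⁻¹ := by
      rw [← Matrix.det_mul, hA2, Matrix.det_nonsing_inv, Ring.inverse_eq_inv]
    have h2 : Sig.det ^ (-(1 : ℝ) / 2) * Sig.det ^ (-(1 : ℝ) / 2) = Sig.det⁻¹ := by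
      rw [← Real.rpow_add hdetS]
      norm_num
      exact Real.rpow_neg_one _
    exact (mul_self_inj hdetA.le (Real.rpow_pos_of_pos hdetS _).le).mp (hsq.trans h2.symm)
  -- density change of variables identity
  have hρ : ∀ z, ρx (A⁻¹ *ᵥ z + μ) = A.det * ρz z := by
    intro z
    rw [hρx, hρz]
    have h1 : A⁻¹ *ᵥ z + μ - μ = A⁻¹ *ᵥ z := add_sub_cancel_right _ _
    have h2 : Sig⁻¹ *ᵥ (A⁻¹ *ᵥ z) = A *ᵥ z := by
      rw [← hA2, ← Matrix.mulVec_mulVec,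
        show A *ᵥ A⁻¹ *ᵥ z = z from by rw [Matrix.mulVec_mulVec, hinv', Matrix.one_mulVec]]
    have h3 : (A⁻¹ *ᵥ z) ⬝ᵥ (A *ᵥ z) = ∑ i, z i ^ 2 := by
      rw [Matrix.dotProduct_mulVec, Matrix.vecMul_mulVec, hAis, hinv, Matrix.vecMul_one]
      simp [dotProduct, sq]
    rw [h1, h2, h3, hdetAS]
    ring
  have hρ' : ∀ z, ρz z = A.det⁻¹ * ρx (A⁻¹ *ᵥ z + μ) := by
    intro z
    rw [hρ z, ← mul_assoc, inv_mul_cancel₀ hdetA.ne', one_mul]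
  -- partial derivative expansion
  have hexp : ∀ (k : Fin p) (z : Fin p → ℝ), partialDeriv' ftil k z
      = ∑ m, A⁻¹ m k * partialDeriv' f m (A⁻¹ *ᵥ z + μ) := by
    intro k z
    have hft : ftil = fun z => f (A⁻¹ *ᵥ z + μ) := funext hftil
    set L : (Fin p → ℝ) →L[ℝ] (Fin p → ℝ) :=
      LinearMap.toContinuousLinearMap (Matrix.mulVecLin A⁻¹) with hL
    have hgd : HasFDerivAt (fun z : Fin p → ℝ => A⁻¹ *ᵥ z + μ) L z := by
      have h := (L.hasFDerivAt (x := z)).add_const μ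
      exact h
    have hcomp : fderiv ℝ ftil z = (fderiv ℝ f (A⁻¹ *ᵥ z + μ)).comp L := by
      rw [hft]
      exact ((hf _).hasFDerivAt.comp z hgd).fderiv
    rw [partialDeriv', hcomp]
    have hLs : L (Pi.single k 1) = A⁻¹ *ᵥ Pi.single k 1 := rfl
    rw [ContinuousLinearMap.comp_apply, hLs,
      aux_fderiv_sum f (A⁻¹ *ᵥ z + μ) (A⁻¹ *ᵥ Pi.single k 1)]
    refine Finset.sum_congr rfl fun m _ => ?_
    rw [Matrix.mulVec_single_one, Matrix.col_apply]
  -- base integrands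
  have heq : ∀ m n : Fin p, (fun z => partialDeriv' f m (A⁻¹ *ᵥ z + μ)
        * partialDeriv' f n (A⁻¹ *ᵥ z + μ) * ρz z)
      = fun z => A.det⁻¹ * ((fun x => partialDeriv' f m x * partialDeriv' f n x * ρx x)
        (A⁻¹ *ᵥ z + μ)) := by
    intro m n
    funext z
    rw [hρ' z]
    ring
  have hGint : ∀ m n : Fin p, Integrable (fun z => partialDeriv' f m (A⁻¹ *ᵥ z + μ)
      * partialDeriv' f n (A⁻¹ *ᵥ z + μ) * ρz z) := by
    intro m n
    rw [heq m n]
    exact (aux_cov_integrable A⁻¹ hBne μ _ (hint m n)).const_mul _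
  have hGval : ∀ m n : Fin p, (∫ z, partialDeriv' f m (A⁻¹ *ᵥ z + μ)
      * partialDeriv' f n (A⁻¹ *ᵥ z + μ) * ρz z) = Cmat f ρx m n := by
    intro m n
    rw [heq m n, MeasureTheory.integral_const_mul _ _,
      aux_cov_integral A⁻¹ hBne μ _ (hint m n), hdetAi, inv_inv, abs_of_pos hdetA,
      ← mul_assoc, inv_mul_cancel₀ hdetA.ne', one_mul]
    rfl
  -- the key matrix identity
  have hCz : Cmat ftil ρz = (A⁻¹)ᵀ * Cmat f ρx * A⁻¹ := by
    ext k l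
    show (∫ z, partialDeriv' ftil k z * partialDeriv' ftil l z * ρz z) = _
    calc (∫ z, partialDeriv' ftil k z * partialDeriv' ftil l z * ρz z)
        = ∫ z, ∑ m, ∑ n, (A⁻¹ m k * A⁻¹ n l) * (partialDeriv' f m (A⁻¹ *ᵥ z + μ)
            * partialDeriv' f n (A⁻¹ *ᵥ z + μ) * ρz z) := by
          congr 1
          funext z
          rw [hexp k z, hexp l z, Finset.sum_mul_sum, Finset.sum_mul]
          refine Finset.sum_congr rfl fun m _ => ?_
          rw [Finset.sum_mul]
          refine Finset.sum_congr rfl fun n _ => ?_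
          ring
      _ = ∑ m, ∑ n, (A⁻¹ m k * A⁻¹ n l) * ∫ z, partialDeriv' f m (A⁻¹ *ᵥ z + μ)
            * partialDeriv' f n (A⁻¹ *ᵥ z + μ) * ρz z := by
          rw [MeasureTheory.integral_finset_sum _
            (fun m _ => integrable_finset_sum _ fun n _ => (hGint m n).const_mul _)]
          refine Finset.sum_congr rfl fun m _ => ?_
          rw [MeasureTheory.integral_finset_sum _ (fun n _ => (hGint m n).const_mul _)]
          exact Finset.sum_congr rfl fun n _ => MeasureTheory.integral_const_mul _ _
      _ = ∑ m, ∑ n, (A⁻¹ m k * A⁻¹ n l) * Cmat f ρx m n := by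
          refine Finset.sum_congr rfl fun m _ => Finset.sum_congr rfl fun n _ => ?_
          rw [hGval m n]
      _ = ((A⁻¹)ᵀ * Cmat f ρx * A⁻¹) k l := by
          simp only [Matrix.mul_apply, Matrix.transpose_apply, Finset.sum_mul]
          rw [Finset.sum_comm]
          refine Finset.sum_congr rfl fun m _ => Finset.sum_congr rfl fun n _ => ?_
          ring
  rw [hCz, ← Matrix.mul_assoc, ← Matrix.mul_assoc, ← Matrix.transpose_mul, hinv,
    Matrix.transpose_one, Matrix.one_mul, Matrix.mul_assoc, hinv, Matrix.mul_one]
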